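/- There is a well-defined ℤ-linear map σ : 𝔏₃ ⊗ ℤ/2ℤ → H ⊗ ℤ/2ℤ satisfying σ([[a,b],c] ⊗ 1) = ω(b,c)·(a ⊗ 1) + ω(a,c)·(b ⊗ 1) for all a, b, c ∈ H. -/

import Mathlib

open scoped TensorProduct

noncomputable section

/-- The free Lie ring `𝔏` on the `2g` generators. -/
abbrev L (g : ℕ) : Type := FreeLieAlgebra ℤ (Fin (2 * g))

/-- The free abelian group `H` of rank `2g`. -/
abbrev H (g : ℕ) : Type := Fin (2 * g) → ℤ

/-- The canonical inclusion of `H` into `𝔏` as the degree `1` part. -/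
def toL (g : ℕ) : H g →ₗ[ℤ] L g where
  toFun v := ∑ i, v i • FreeLieAlgebra.of ℤ i
  map_add' x y := by simp [add_smul, Finset.sum_add_distrib]
  map_smul' c x := by simp [Finset.smul_sum, smul_smul]

/-- Index of the basis element `aᵢ`. -/
def aIdx (g : ℕ) (i : Fin g) : Fin (2 * g) := ⟨i.1, by have := i.2; omega⟩

/-- Index of the basis element `bᵢ`. -/
def bIdx (g : ℕ) (i : Fin g) : Fin (2 * g) := ⟨g + i.1, by have := i.2; omega⟩

/-- The basis element `aᵢ` of `H`. -/
def aV (g : ℕ) (i : Fin g) : H g := Pi.single (aIdx g i) 1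

/-- The basis element `bᵢ` of `H`. -/
def bV (g : ℕ) (i : Fin g) : H g := Pi.single (bIdx g i) 1

/-- The symplectic pairing `ω : H × H → ℤ`, with `ω(aᵢ,bⱼ) = δᵢⱼ`, `ω(aᵢ,aⱼ) = ω(bᵢ,bⱼ) = 0`. -/
def omegaPair (g : ℕ) (x y : H g) : ℤ :=
  ∑ i : Fin g, (x (aIdx g i) * y (bIdx g i) - x (bIdx g i) * y (aIdx g i))

/-- `IsBrkt g k x` means that `x` is a `k`-fold Lie bracket of elements of `H`. -/
inductive IsBrkt (g : ℕ) : ℕ → L g → Prop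
  | of (v : H g) : IsBrkt g 1 (toL g v)
  | lie {m n : ℕ} {x y : L g} : IsBrkt g m x → IsBrkt g n y → IsBrkt g (m + n) ⁅x, y⁆

/-- `𝔏ₖ`, the degree-`k` homogeneous component of the free Lie ring:
the `ℤ`-span of all `k`-fold Lie brackets of elements of `H`. -/
def homog (g k : ℕ) : Submodule ℤ (L g) := Submodule.span ℤ {x | IsBrkt g k x}

lemma toL_mem (g : ℕ) (v : H g) : toL g v ∈ homog g 1 :=
  Submodule.subset_span (IsBrkt.of v)

lemma lie_mem_homog {g m n : ℕ} {x y : L g} (hx : x ∈ homog g m) (hy : y ∈ homog g n) :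
    ⁅x, y⁆ ∈ homog g (m + n) := by
  induction hx using Submodule.span_induction with
  | mem a ha =>
    induction hy using Submodule.span_induction with
    | mem b hb => exact Submodule.subset_span (ha.lie hb)
    | zero => simp
    | add b c hb hc ihb ihc => rw [lie_add]; exact Submodule.add_mem _ ihb ihc
    | smul t b hb ihb => rw [lie_smul]; exact Submodule.smul_mem _ t ihb
  | zero => simp
  | add a c ha hc iha ihc => rw [add_lie]; exact Submodule.add_mem _ iha ihc
  | smul t a ha iha => rw [smul_lie]; exact Submodule.smul_mem _ t iha

/-- `[[a,b],c]` as an element of `𝔏₃`. -/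
def trip (g : ℕ) (a b c : H g) : ↥(homog g 3) :=
  ⟨⁅⁅toL g a, toL g b⁆, toL g c⁆,
    Submodule.subset_span (((IsBrkt.of a).lie (IsBrkt.of b)).lie (IsBrkt.of c))⟩

/-- The symplectic element `ω = Σᵢ [aᵢ, bᵢ] ∈ 𝔏₂`. -/
def omegaL (g : ℕ) : L g := ∑ i : Fin g, ⁅toL g (aV g i), toL g (bV g i)⁆

lemma omegaL_mem (g : ℕ) : omegaL g ∈ homog g 2 :=
  Submodule.sum_mem _ fun i _ =>
    Submodule.subset_span ((IsBrkt.of (aV g i)).lie (IsBrkt.of (bV g i)))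

/-- The Lie ideal `⟨⟨ω⟩⟩` of `𝔏` generated by `ω`. -/
def omegaIdeal (g : ℕ) : LieIdeal ℤ (L g) := LieSubmodule.lieSpan ℤ (L g) {omegaL g}

end

noncomputable section MyAux

attribute [local instance 100] LieRing.ofAssociativeRing

variable (g : ℕ)

def Fword : FreeMonoid (Fin (2*g)) → H g := fun w =>
  match (w : List (Fin (2*g))) with
  | [i, j, k] => omegaPair g (Pi.single j 1) (Pi.single k 1) • Pi.single i 1
  | _ => 0

def tau : FreeAlgebra ℤ (Fin (2*g)) →ₗ[ℤ] H g :=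
  (Finsupp.linearCombination ℤ (Fword g)).comp ((MonoidAlgebra.coeffLinearEquiv ℤ).toLinearMap.comp
    (FreeAlgebra.equivMonoidAlgebraFreeMonoid (R := ℤ) (X := Fin (2*g))).toLinearMap)

lemma tau_iii (i j k : Fin (2*g)) :
    tau g (FreeAlgebra.ι ℤ i * FreeAlgebra.ι ℤ j * FreeAlgebra.ι ℤ k) =
      omegaPair g (Pi.single j 1) (Pi.single k 1) • Pi.single i 1 := by
  rw [tau]
  show (Finsupp.linearCombination ℤ (Fword g)) ((FreeAlgebra.equivMonoidAlgebraFreeMonoid (R := ℤ) (X := Fin (2*g))) (FreeAlgebra.ι ℤ i * FreeAlgebra.ι ℤ j * FreeAlgebra.ι ℤ k)).coeff = _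
  rw [map_mul (FreeAlgebra.equivMonoidAlgebraFreeMonoid (R := ℤ) (X := Fin (2*g))) (FreeAlgebra.ι ℤ i * FreeAlgebra.ι ℤ j) (FreeAlgebra.ι ℤ k),
     map_mul (FreeAlgebra.equivMonoidAlgebraFreeMonoid (R := ℤ) (X := Fin (2*g))) (FreeAlgebra.ι ℤ i) (FreeAlgebra.ι ℤ j)]
  rw [show (FreeAlgebra.equivMonoidAlgebraFreeMonoid (R := ℤ) (X := Fin (2*g))) (FreeAlgebra.ι ℤ i) = MonoidAlgebra.single (FreeMonoid.of i) 1 from by simp [FreeAlgebra.equivMonoidAlgebraFreeMonoid]]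
  rw [show (FreeAlgebra.equivMonoidAlgebraFreeMonoid (R := ℤ) (X := Fin (2*g))) (FreeAlgebra.ι ℤ j) = MonoidAlgebra.single (FreeMonoid.of j) 1 from by simp [FreeAlgebra.equivMonoidAlgebraFreeMonoid]]
  rw [show (FreeAlgebra.equivMonoidAlgebraFreeMonoid (R := ℤ) (X := Fin (2*g))) (FreeAlgebra.ι ℤ k) = MonoidAlgebra.single (FreeMonoid.of k) 1 from by simp [FreeAlgebra.equivMonoidAlgebraFreeMonoid]]
  rw [MonoidAlgebra.single_mul_single, MonoidAlgebra.single_mul_single]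
  simp only [MonoidAlgebra.coeff_single, Finsupp.linearCombination_single, one_mul, one_smul]
  rfl

def rho : L g →ₗ⁅ℤ⁆ FreeAlgebra ℤ (Fin (2*g)) :=
  FreeLieAlgebra.lift ℤ (fun i => FreeAlgebra.ι ℤ i)

lemma rho_toL (v : H g) : rho g (toL g v) = ∑ i, v i • FreeAlgebra.ι ℤ i := by
  rw [toL]
  simp only [LinearMap.coe_mk, AddHom.coe_mk]
  show (rho g).toLinearMap _ = _
  rw [map_sum]
  exact Finset.sum_congr rfl fun i _ => by
    show (rho g) _ = _
    rw [map_smul]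
    simp [rho, FreeLieAlgebra.lift_of_apply]
    exact Or.inl (FreeLieAlgebra.lift_of_apply (R := ℤ) _ i)

lemma omegaPair_bilin (y z : H g) :
    ∑ j, ∑ k, (y j * z k) * omegaPair g (Pi.single j 1) (Pi.single k 1) = omegaPair g y z := by
  simp only [omegaPair, Pi.single_apply, Finset.mul_sum, mul_sub, mul_ite, mul_one, mul_zero]
  have swap : ∀ f : Fin (2*g) → Fin (2*g) → Fin g → ℤ,
      ∑ u : Fin (2*g), ∑ v : Fin (2*g), ∑ t : Fin g, f u v t
        = ∑ t : Fin g, ∑ u : Fin (2*g), ∑ v : Fin (2*g), f u v t := by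
    intro f
    rw [show (∑ u : Fin (2*g), ∑ v : Fin (2*g), ∑ t : Fin g, f u v t)
          = ∑ u : Fin (2*g), ∑ t : Fin g, ∑ v : Fin (2*g), f u v t from
        Finset.sum_congr rfl fun u _ => Finset.sum_comm]
    exact Finset.sum_comm
  rw [swap]
  refine Finset.sum_congr rfl fun t _ => ?_
  simp [Finset.sum_sub_distrib, Finset.sum_ite_eq]

lemma sum_single (x : H g) : ∑ i, x i • (Pi.single i 1 : H g) = x := by
  funext t
  simp [Pi.single_apply, Finset.sum_ite_eq']

lemma tau_triple (x y z : H g) :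
    tau g (rho g (toL g x) * rho g (toL g y) * rho g (toL g z)) = omegaPair g y z • x := by
  rw [rho_toL, rho_toL, rho_toL]
  simp only [Finset.sum_mul, Finset.mul_sum, smul_mul_assoc, mul_smul_comm, map_sum, map_smul,
    tau_iii, smul_smul]
  have inner : ∀ jj kk : Fin (2*g),
      ∑ i, (x i * omegaPair g (Pi.single jj 1) (Pi.single kk 1)) • (Pi.single i 1 : H g)
        = omegaPair g (Pi.single jj 1) (Pi.single kk 1) • x := by
    intro jj kk
    conv_rhs => rw [← sum_single g x, Finset.smul_sum]
    refine Finset.sum_congr rfl fun i _ => ?_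
    rw [smul_smul, mul_comm (x i)]
  simp_rw [inner, Finset.smul_sum, smul_smul, ← Finset.sum_smul]
  congr 1
  rw [← omegaPair_bilin g y z, Finset.sum_comm]
  refine Finset.sum_congr rfl fun k _ => Finset.sum_congr rfl fun j _ => by ring

lemma omegaPair_antisymm (x y : H g) : omegaPair g y x = - omegaPair g x y := by
  rw [omegaPair, omegaPair, ← Finset.sum_neg_distrib]
  exact Finset.sum_congr rfl fun i _ => by ring

end MyAux

noncomputable section

/-- There is a well-defined `ℤ`-linear map
`σ : 𝔏₃ ⊗ ℤ/2ℤ → H ⊗ ℤ/2ℤ` with `σ([[a,b],c] ⊗ 1) = ω(b,c)·(a ⊗ 1) + ω(a,c)·(b ⊗ 1)`. -/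
theorem stmt0 (g : ℕ) (hg : 1 ≤ g) :
    ∃ σ : (↥(homog g 3) ⊗[ℤ] ZMod 2) →ₗ[ℤ] (H g ⊗[ℤ] ZMod 2),
      ∀ a b c : H g,
        σ (trip g a b c ⊗ₜ (1 : ZMod 2)) =
          omegaPair g b c • (a ⊗ₜ (1 : ZMod 2)) + omegaPair g a c • (b ⊗ₜ (1 : ZMod 2)) := by
  letI : LieRing (FreeAlgebra ℤ (Fin (2 * g))) := LieRing.ofAssociativeRing
  refine ⟨LinearMap.rTensor (ZMod 2) ((tau g).comp ((rho g).toLinearMap.comp (homog g 3).subtype)), fun a b c => ?_⟩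
  have h2 : ∀ (w : H g) (n : ℤ), (2 * n) • (w ⊗ₜ (1 : ZMod 2) : H g ⊗[ℤ] ZMod 2) = 0 := by
    intro w n
    rw [← TensorProduct.tmul_smul, zsmul_one]
    have : ((2 * n : ℤ) : ZMod 2) = 0 := by
      push_cast
      rw [show ((2:ZMod 2)) = 0 from rfl]
      ring
    rw [this, TensorProduct.tmul_zero]
  have key : (tau g) ((rho g) (⁅⁅toL g a, toL g b⁆, toL g c⁆)) =
      omegaPair g b c • a - omegaPair g a c • b - (2 * omegaPair g a b) • c := by
    rw [LieHom.map_lie, LieHom.map_lie, Ring.lie_def, Ring.lie_def]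
    rw [sub_mul, mul_sub]
    simp only [map_sub]
    rw [tau_triple, tau_triple]
    have h3 : (rho g) (toL g c) * ((rho g) (toL g a) * (rho g) (toL g b)) =
        (rho g) (toL g c) * (rho g) (toL g a) * (rho g) (toL g b) := (mul_assoc _ _ _).symm
    have h4 : (rho g) (toL g c) * ((rho g) (toL g b) * (rho g) (toL g a)) =
        (rho g) (toL g c) * (rho g) (toL g b) * (rho g) (toL g a) := (mul_assoc _ _ _).symm
    rw [h3, h4, tau_triple, tau_triple, omegaPair_antisymm g b a]
    module
  erw [LinearMap.rTensor_tmul]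
  simp only [LinearMap.comp_apply, Submodule.subtype_apply, LieHom.coe_toLinearMap, trip]
  rw [key]
  rw [sub_sub, TensorProduct.sub_tmul, TensorProduct.add_tmul]
  rw [← TensorProduct.smul_tmul', ← TensorProduct.smul_tmul', ← TensorProduct.smul_tmul']
  rw [h2 c (omegaPair g a b), add_zero, sub_eq_add_neg]
  congr 1
  have e2 := h2 b (omegaPair g a c)
  have : -(omegaPair g a c • (b ⊗ₜ (1 : ZMod 2) : H g ⊗[ℤ] ZMod 2)) =
      omegaPair g a c • (b ⊗ₜ (1 : ZMod 2) : H g ⊗[ℤ] ZMod 2)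
        - (2 * omegaPair g a c) • (b ⊗ₜ (1 : ZMod 2) : H g ⊗[ℤ] ZMod 2) := by module
  rw [this, e2, sub_zero]

end
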